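/- Let G be a group generated by two elements x and y satisfying x² = yᵐ for an integer m ≥ 2, and set t₁ = xy and t₂ = yx. Then t₁ and t₂ satisfy the braid relation Br^m(t₁,t₂), i.e., the alternating product t₁t₂t₁⋯ of length m equals t₂t₁t₂⋯ of length m. -/
import Mathlib


theorem braid_relation_of_polygon {G : Type*} [Group G] (x y : G) (m : ℕ)
    (hgen : Subgroup.closure ({x, y} : Set G) = ⊤) (hm : 2 ≤ m)
    (hxy : x ^ 2 = y ^ m) :
    (x * y * (y * x)) ^ (m / 2) * (x * y) ^ (m % 2) =
      (y * x * (x * y)) ^ (m / 2) * (y * x) ^ (m % 2) := by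
  have hxx : x * x = y ^ m := by rw [← hxy, sq]
  have h2 : x * (x * y * (y * x)) = y ^ (m + 2) * x := by
    calc x * (x * y * (y * x)) = (x * x) * (y * y) * x := by simp [mul_assoc]
    _ = y ^ m * y ^ 2 * x := by rw [hxx, ← sq]
    _ = y ^ (m + 2) * x := by rw [← pow_add]
  have hR : y * x * (x * y) = y ^ (m + 2) := by
    calc y * x * (x * y) = y * (x * x) * y := by simp [mul_assoc]
    _ = y * y ^ m * y := by rw [hxx]
    _ = y ^ (m + 2) := by rw [← pow_succ', ← pow_succ]
  have key : ∀ k : ℕ, (x * y * (y * x)) ^ (k + 1) = x * y ^ 2 * (y ^ (m + 2)) ^ k * x := by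
    intro k
    induction k with
    | zero => simp [sq, mul_assoc]
    | succ k ih =>
      rw [pow_succ, ih]
      calc x * y ^ 2 * (y ^ (m + 2)) ^ k * x * (x * y * (y * x))
          = x * y ^ 2 * (y ^ (m + 2)) ^ k * (x * (x * y * (y * x))) := by simp [mul_assoc]
        _ = x * y ^ 2 * (y ^ (m + 2)) ^ k * (y ^ (m + 2) * x) := by rw [h2]
        _ = x * y ^ 2 * ((y ^ (m + 2)) ^ k * y ^ (m + 2)) * x := by simp [mul_assoc]
        _ = x * y ^ 2 * (y ^ (m + 2)) ^ (k + 1) * x := by rw [← pow_succ]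
  rw [hR]
  obtain ⟨l, rfl⟩ | ⟨l, rfl⟩ := Nat.even_or_odd m
  · -- m = l + l
    have hl : 1 ≤ l := by omega
    obtain ⟨k, rfl⟩ := Nat.exists_eq_add_of_le hl
    have hd : (1 + k + (1 + k)) / 2 = k + 1 := by omega
    have hmo : (1 + k + (1 + k)) % 2 = 0 := by omega
    rw [hd, hmo, key k, pow_zero, pow_zero, mul_one, mul_one]
    have e1 : y ^ 2 * (y ^ (1 + k + (1 + k) + 2)) ^ k = (y ^ (1 + k + (1 + k))) ^ (k + 1) := by
      simp only [← pow_mul, ← pow_add]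
      congr 1; ring
    calc x * y ^ 2 * (y ^ (1 + k + (1 + k) + 2)) ^ k * x
        = x * (y ^ 2 * (y ^ (1 + k + (1 + k) + 2)) ^ k) * x := by simp [mul_assoc]
      _ = x * (x ^ 2) ^ (k + 1) * x := by rw [e1, ← hxy]
      _ = (x ^ 2) ^ (k + 2) := by
          simp only [← pow_mul, ← pow_succ, ← pow_succ']
          congr 1
          try ring
      _ = (y ^ (1 + k + (1 + k))) ^ (k + 2) := by rw [hxy]
      _ = (y ^ (1 + k + (1 + k) + 2)) ^ (k + 1) := by
          simp only [← pow_mul]; congr 1; ring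
  · -- m = 2 * l + 1
    have hl : 1 ≤ l := by omega
    obtain ⟨k, rfl⟩ := Nat.exists_eq_add_of_le hl
    have hd : (2 * (1 + k) + 1) / 2 = k + 1 := by omega
    have hmo : (2 * (1 + k) + 1) % 2 = 1 := by omega
    rw [hd, hmo, key k, pow_one, pow_one]
    have e1 : y ^ 2 * (y ^ (2 * (1 + k) + 1 + 2)) ^ k * y ^ (2 * (1 + k) + 1) * y
        = (y ^ (2 * (1 + k) + 1)) ^ (k + 2) := by
      simp only [← pow_mul, ← pow_add, ← pow_succ]
      congr 1; ring
    have e2 : (y ^ (2 * (1 + k) + 1 + 2)) ^ (k + 1) * y = (y ^ (2 * (1 + k) + 1)) ^ (k + 2) := by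
      simp only [← pow_mul, ← pow_succ]
      congr 1; ring
    calc x * y ^ 2 * (y ^ (2 * (1 + k) + 1 + 2)) ^ k * x * (x * y)
        = x * (y ^ 2 * (y ^ (2 * (1 + k) + 1 + 2)) ^ k * (x * x) * y) := by simp [mul_assoc]
      _ = x * (y ^ 2 * (y ^ (2 * (1 + k) + 1 + 2)) ^ k * y ^ (2 * (1 + k) + 1) * y) := by rw [hxx]
      _ = x * (y ^ (2 * (1 + k) + 1)) ^ (k + 2) := by rw [e1]
      _ = x * (x ^ 2) ^ (k + 2) := by rw [← hxy]
      _ = (x ^ 2) ^ (k + 2) * x := by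
          simp only [← pow_mul, ← pow_succ, ← pow_succ']
          try (congr 1; ring)
      _ = (y ^ (2 * (1 + k) + 1)) ^ (k + 2) * x := by rw [hxy]
      _ = (y ^ (2 * (1 + k) + 1 + 2)) ^ (k + 1) * y * x := by rw [e2]
      _ = (y ^ (2 * (1 + k) + 1 + 2)) ^ (k + 1) * (y * x) := by rw [mul_assoc]
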